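/- Let ψ: ℝ² → [0,∞) be continuous, convex, 2-homogeneous (ψ(λξ) = λ²ψ(ξ) for λ ≥ 0), and strictly positive on ℝ²\{0}. Let 𝕊 = span_ℤ{b₁,b₂} for linearly independent b₁,b₂ ∈ ℝ². Define φ(ξ) = inf { Σ_{k=1}^M λ_k ψ(ξ_k) : M ∈ ℕ, λ_k ≥ 0, ξ_k ∈ 𝕊, Σ_{k=1}^M λ_k ξ_k = ξ }. Then the infimum in the definition of φ is attained (i.e. it is a minimum). -/

import Mathlib

open scoped BigOperators

noncomputable section

/-- The lattice `𝕊 = span_ℤ {b₁, b₂}` of admissible Burgers vectors. -/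
def lattice (b₁ b₂ : Fin 2 → ℝ) : Set (Fin 2 → ℝ) :=
  {v | ∃ m n : ℤ, v = (m : ℝ) • b₁ + (n : ℝ) • b₂}


def En (N : ℤ) : Finset (ℤ × ℤ) :=
  ((Finset.Icc (-N) N) ×ˢ (Finset.Icc (-N) N)).filter (fun p => p ≠ (0,0))

def vecc (b₁ b₂ : Fin 2 → ℝ) (p : ℤ × ℤ) : Fin 2 → ℝ := (p.1 : ℝ) • b₁ + (p.2 : ℝ) • b₂

lemma mem_En {N : ℤ} {p : ℤ × ℤ} : p ∈ En N ↔ |p.1| ≤ N ∧ |p.2| ≤ N ∧ p ≠ (0,0) := by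
  simp [En, Finset.mem_filter, Finset.mem_Icc, abs_le, and_assoc]

lemma Sg (ψ : (Fin 2 → ℝ) → ℝ) (b₁ b₂ : Fin 2 → ℝ) (hψnn : ∀ ξ, 0 ≤ ψ ξ)
    (N : ℤ) (hN1 : 1 ≤ N)
    (hK : ∀ m n : ℤ, ¬(|m| ≤ N ∧ |n| ≤ N) →
      |(m:ℝ)| * ψ ((Int.sign m : ℝ) • b₁) + |(n:ℝ)| * ψ ((Int.sign n : ℝ) • b₂)
        ≤ ψ ((m:ℝ) • b₁ + (n:ℝ) • b₂))
    (lam : ℝ) (hlam : 0 ≤ lam) (v : Fin 2 → ℝ) (hv : v ∈ lattice b₁ b₂) :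
    ∃ μ : ℤ × ℤ → ℝ, (∀ p, 0 ≤ μ p) ∧
      (∑ p ∈ En N, μ p • vecc b₁ b₂ p) = lam • v ∧
      (∑ p ∈ En N, μ p * ψ (vecc b₁ b₂ p)) ≤ lam * ψ v := by
  obtain ⟨m, n, rfl⟩ := hv
  by_cases hA : |m| ≤ N ∧ |n| ≤ N
  · by_cases h0 : (m, n) = ((0 : ℤ), (0 : ℤ))
    · refine ⟨0, fun p => le_rfl, ?_, ?_⟩
      · obtain ⟨rfl, rfl⟩ := Prod.mk.injEq .. ▸ h0
        simp
      · simp only [Pi.zero_apply, zero_mul, Finset.sum_const_zero]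
        exact mul_nonneg hlam (hψnn _)
    · have hmem : ((m, n) : ℤ × ℤ) ∈ En N := mem_En.mpr ⟨hA.1, hA.2, h0⟩
      refine ⟨fun p => if p = (m, n) then lam else 0, fun p => by positivity, ?_, ?_⟩
      · simp only [ite_smul, zero_smul]
        rw [Finset.sum_ite_eq' (En N) (m, n) (fun p => lam • vecc b₁ b₂ p)]
        simp [hmem, vecc]
      · simp only [ite_mul, zero_mul]
        rw [Finset.sum_ite_eq' (En N) (m, n) (fun p => lam * ψ (vecc b₁ b₂ p))]
        simp [hmem, vecc]
  · have hsgn : ∀ k : ℤ, (|(k:ℝ)|) * (k.sign : ℝ) = (k : ℝ) := by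
      intro k
      rw [← Int.cast_abs, ← Int.cast_mul, mul_comm, Int.sign_mul_abs]
    have hsmem : ∀ k : ℤ, k ≠ 0 → ∀ q : ℤ × ℤ, q = (k.sign, 0) ∨ q = (0, k.sign) → q ∈ En N := by
      intro k hk q hq
      have hs : k.sign = 1 ∨ k.sign = -1 := by
        rcases lt_trichotomy k 0 with h | h | h
        · right; exact Int.sign_eq_neg_one_iff_neg.mpr h
        · exact absurd h hk
        · left; exact Int.sign_eq_one_iff_pos.mpr h
      have h1 : |k.sign| ≤ N := by rcases hs with h | h <;> rw [h] <;> simpa using hN1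
      have h0 : k.sign ≠ 0 := by rcases hs with h | h <;> rw [h] <;> decide
      have hN0 : |(0:ℤ)| ≤ N := by simpa using hN1.trans' (by norm_num)
      rcases hq with rfl | rfl
      · exact mem_En.mpr ⟨h1, hN0, by simp [h0]⟩
      · exact mem_En.mpr ⟨hN0, h1, by simp [h0]⟩
    refine ⟨fun p => (if p = (m.sign, 0) then lam * |(m:ℝ)| else 0) +
      (if p = (0, n.sign) then lam * |(n:ℝ)| else 0),
      fun p => add_nonneg (by split <;> positivity) (by split <;> positivity), ?_, ?_⟩
    · have h1 : ∑ p ∈ En N, (if p = ((m.sign : ℤ), (0:ℤ)) then lam * |(m:ℝ)| else 0) • vecc b₁ b₂ p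
          = (lam * (m:ℝ)) • b₁ := by
        simp only [ite_smul, zero_smul]
        rw [Finset.sum_ite_eq' (En N) ((m.sign, 0) : ℤ × ℤ) (fun p => (lam * |(m:ℝ)|) • vecc b₁ b₂ p)]
        by_cases hm : m = 0
        · subst hm
          rw [if_neg (by simp [mem_En])]
          simp
        · rw [if_pos (hsmem m hm _ (Or.inl rfl))]
          show (lam * |(m:ℝ)|) • ((m.sign : ℝ) • b₁ + ((0:ℤ) : ℝ) • b₂) = _
          rw [Int.cast_zero, zero_smul, add_zero, smul_smul, mul_assoc, hsgn m]
      have h2 : ∑ p ∈ En N, (if p = ((0:ℤ), (n.sign : ℤ)) then lam * |(n:ℝ)| else 0) • vecc b₁ b₂ p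
          = (lam * (n:ℝ)) • b₂ := by
        simp only [ite_smul, zero_smul]
        rw [Finset.sum_ite_eq' (En N) ((0, n.sign) : ℤ × ℤ) (fun p => (lam * |(n:ℝ)|) • vecc b₁ b₂ p)]
        by_cases hn : n = 0
        · subst hn
          rw [if_neg (by simp [mem_En])]
          simp
        · rw [if_pos (hsmem n hn _ (Or.inr rfl))]
          show (lam * |(n:ℝ)|) • (((0:ℤ) : ℝ) • b₁ + (n.sign : ℝ) • b₂) = _
          rw [Int.cast_zero, zero_smul, zero_add, smul_smul, mul_assoc, hsgn n]
      calc ∑ p ∈ En N, ((if p = ((m.sign : ℤ), (0:ℤ)) then lam * |(m:ℝ)| else 0) +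
              (if p = ((0:ℤ), (n.sign : ℤ)) then lam * |(n:ℝ)| else 0)) • vecc b₁ b₂ p
          = (∑ p ∈ En N, (if p = ((m.sign : ℤ), (0:ℤ)) then lam * |(m:ℝ)| else 0) • vecc b₁ b₂ p)
            + ∑ p ∈ En N, (if p = ((0:ℤ), (n.sign : ℤ)) then lam * |(n:ℝ)| else 0) • vecc b₁ b₂ p := by
            simp only [add_smul, Finset.sum_add_distrib]
        _ = (lam * (m:ℝ)) • b₁ + (lam * (n:ℝ)) • b₂ := by rw [h1, h2]
        _ = lam • ((m:ℝ) • b₁ + (n:ℝ) • b₂) := by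
            rw [smul_add, smul_smul, smul_smul]
    · have c1 : ∑ p ∈ En N, (if p = ((m.sign : ℤ), (0:ℤ)) then lam * |(m:ℝ)| else 0) * ψ (vecc b₁ b₂ p)
          ≤ lam * (|(m:ℝ)| * ψ ((m.sign : ℝ) • b₁)) := by
        simp only [ite_mul, zero_mul]
        rw [Finset.sum_ite_eq' (En N) ((m.sign, 0) : ℤ × ℤ) (fun p => (lam * |(m:ℝ)|) * ψ (vecc b₁ b₂ p))]
        split
        · apply le_of_eq
          show (lam * |(m:ℝ)|) * ψ ((m.sign : ℝ) • b₁ + ((0:ℤ) : ℝ) • b₂) = _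
          rw [Int.cast_zero, zero_smul, add_zero, mul_assoc]
        · have := hψnn ((m.sign : ℝ) • b₁); positivity
      have c2 : ∑ p ∈ En N, (if p = ((0:ℤ), (n.sign : ℤ)) then lam * |(n:ℝ)| else 0) * ψ (vecc b₁ b₂ p)
          ≤ lam * (|(n:ℝ)| * ψ ((n.sign : ℝ) • b₂)) := by
        simp only [ite_mul, zero_mul]
        rw [Finset.sum_ite_eq' (En N) ((0, n.sign) : ℤ × ℤ) (fun p => (lam * |(n:ℝ)|) * ψ (vecc b₁ b₂ p))]
        split
        · apply le_of_eq
          show (lam * |(n:ℝ)|) * ψ (((0:ℤ) : ℝ) • b₁ + (n.sign : ℝ) • b₂) = _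
          rw [Int.cast_zero, zero_smul, zero_add, mul_assoc]
        · have := hψnn ((n.sign : ℝ) • b₂); positivity
      calc ∑ p ∈ En N, ((if p = ((m.sign : ℤ), (0:ℤ)) then lam * |(m:ℝ)| else 0) +
              (if p = ((0:ℤ), (n.sign : ℤ)) then lam * |(n:ℝ)| else 0)) * ψ (vecc b₁ b₂ p)
          = (∑ p ∈ En N, (if p = ((m.sign : ℤ), (0:ℤ)) then lam * |(m:ℝ)| else 0) * ψ (vecc b₁ b₂ p))
            + ∑ p ∈ En N, (if p = ((0:ℤ), (n.sign : ℤ)) then lam * |(n:ℝ)| else 0) * ψ (vecc b₁ b₂ p) := by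
            simp only [add_mul, Finset.sum_add_distrib]
        _ ≤ lam * (|(m:ℝ)| * ψ ((m.sign : ℝ) • b₁)) + lam * (|(n:ℝ)| * ψ ((n.sign : ℝ) • b₂)) :=
            add_le_add c1 c2
        _ = lam * (|(m:ℝ)| * ψ ((m.sign : ℝ) • b₁) + |(n:ℝ)| * ψ ((n.sign : ℝ) • b₂)) := by ring
        _ ≤ lam * ψ ((m:ℝ) • b₁ + (n:ℝ) • b₂) :=
            mul_le_mul_of_nonneg_left (hK m n hA) hlam

lemma Rred (ψ : (Fin 2 → ℝ) → ℝ) (b₁ b₂ : Fin 2 → ℝ) (hψnn : ∀ ξ, 0 ≤ ψ ξ)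
    (N : ℤ) (hN1 : 1 ≤ N)
    (hK : ∀ m n : ℤ, ¬(|m| ≤ N ∧ |n| ≤ N) →
      |(m:ℝ)| * ψ ((Int.sign m : ℝ) • b₁) + |(n:ℝ)| * ψ ((Int.sign n : ℝ) • b₂)
        ≤ ψ ((m:ℝ) • b₁ + (n:ℝ) • b₂)) :
    ∀ (M : ℕ) (lam : Fin M → ℝ) (v : Fin M → (Fin 2 → ℝ)),
      (∀ k, 0 ≤ lam k) → (∀ k, v k ∈ lattice b₁ b₂) →
      ∃ μ : ℤ × ℤ → ℝ, (∀ p, 0 ≤ μ p) ∧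
        (∑ p ∈ En N, μ p • vecc b₁ b₂ p) = ∑ k, lam k • v k ∧
        (∑ p ∈ En N, μ p * ψ (vecc b₁ b₂ p)) ≤ ∑ k, lam k * ψ (v k) := by
  intro M
  induction M with
  | zero =>
    intro lam v _ _
    exact ⟨0, fun p => le_rfl, by simp, by simp⟩
  | succ M ih =>
    intro lam v hlam hv
    obtain ⟨μt, hμt0, hμts, hμtc⟩ := ih (fun k => lam k.succ) (fun k => v k.succ)
      (fun k => hlam k.succ) (fun k => hv k.succ)
    obtain ⟨μh, hμh0, hμhs, hμhc⟩ := Sg ψ b₁ b₂ hψnn N hN1 hK (lam 0) (hlam 0) (v 0) (hv 0)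
    refine ⟨μh + μt, fun p => add_nonneg (hμh0 p) (hμt0 p), ?_, ?_⟩
    · rw [Fin.sum_univ_succ]
      simp only [Pi.add_apply, add_smul, Finset.sum_add_distrib, hμhs, hμts]
    · rw [Fin.sum_univ_succ]
      simp only [Pi.add_apply, add_mul, Finset.sum_add_distrib]
      exact add_le_add hμhc hμtc


-- L1: coercivity
lemma L1 (ψ : (Fin 2 → ℝ) → ℝ) (hcont : Continuous ψ)
    (hhom : ∀ (l : ℝ) (ξ : Fin 2 → ℝ), 0 ≤ l → ψ (l • ξ) = l ^ 2 * ψ ξ)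
    (hpos : ∀ ξ : Fin 2 → ℝ, ξ ≠ 0 → 0 < ψ ξ) :
    ∃ c > 0, ∀ v : Fin 2 → ℝ, c * ‖v‖ ^ 2 ≤ ψ v := by
  have hψ0 : ψ 0 = 0 := by
    have := hhom 0 0 le_rfl
    simpa using this
  have hsph : IsCompact (Metric.sphere (0 : Fin 2 → ℝ) 1) := isCompact_sphere 0 1
  have hne : (Metric.sphere (0 : Fin 2 → ℝ) 1).Nonempty := by
    apply NormedSpace.sphere_nonempty.2
    norm_num
  obtain ⟨x₀, hx₀, hmin⟩ := hsph.exists_isMinOn hne hcont.continuousOn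
  have hx₀n : ‖x₀‖ = 1 := by simpa using hx₀
  have hx₀0 : x₀ ≠ 0 := by intro h; rw [h] at hx₀n; simp at hx₀n
  refine ⟨ψ x₀, hpos x₀ hx₀0, fun v => ?_⟩
  rcases eq_or_ne v 0 with rfl | hv
  · simp [hψ0]
  · have hnv : (0:ℝ) < ‖v‖ := norm_pos_iff.2 hv
    have hu : ‖v‖⁻¹ • v ∈ Metric.sphere (0 : Fin 2 → ℝ) 1 := by
      simp [norm_smul, abs_of_pos (inv_pos.2 hnv), inv_mul_cancel₀ hnv.ne']
    have h1 : ψ x₀ ≤ ψ (‖v‖⁻¹ • v) := hmin hu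
    have h2 : ψ (‖v‖⁻¹ • v) = (‖v‖⁻¹) ^ 2 * ψ v := hhom _ _ (by positivity)
    rw [h2] at h1
    have := mul_le_mul_of_nonneg_left h1 (le_of_lt (by positivity : (0:ℝ) < ‖v‖ ^ 2))
    calc ψ x₀ * ‖v‖ ^ 2 = ‖v‖ ^ 2 * ψ x₀ := mul_comm _ _
      _ ≤ ‖v‖ ^ 2 * (‖v‖⁻¹ ^ 2 * ψ v) := this
      _ = ψ v := by field_simp


lemma L2 (b₁ b₂ : Fin 2 → ℝ) (hli : LinearIndependent ℝ ![b₁, b₂]) :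
    ∃ C > 0, (∀ x y : ℝ, |x| ≤ C * ‖x • b₁ + y • b₂‖ ∧ |y| ≤ C * ‖x • b₁ + y • b₂‖)
      ∧ ∀ w : Fin 2 → ℝ, ∃ x y : ℝ, w = x • b₁ + y • b₂ := by
  let T : (Fin 2 → ℝ) →ₗ[ℝ] (Fin 2 → ℝ) :=
  { toFun := fun c => c 0 • b₁ + c 1 • b₂
    map_add' := by intro a b; simp only [Pi.add_apply, add_smul]; abel
    map_smul' := by intro r a; simp only [Pi.smul_apply, smul_eq_mul, RingHom.id_apply,
      smul_add, smul_smul] }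
  have hinj : Function.Injective T := by
    rw [injective_iff_map_eq_zero]
    intro c hc
    have h := Fintype.linearIndependent_iff.mp hli c (by
      have hc' : c 0 • b₁ + c 1 • b₂ = 0 := hc
      simpa [Fin.sum_univ_two] using hc')
    funext i
    fin_cases i <;> simp [h 0, h 1]
  have hsurj : Function.Surjective T := LinearMap.injective_iff_surjective.mp hinj
  let e : (Fin 2 → ℝ) ≃ₗ[ℝ] (Fin 2 → ℝ) := LinearEquiv.ofBijective T ⟨hinj, hsurj⟩
  let g : (Fin 2 → ℝ) →L[ℝ] (Fin 2 → ℝ) := LinearMap.toContinuousLinearMap (e.symm : (Fin 2 → ℝ) →ₗ[ℝ] (Fin 2 → ℝ))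
  refine ⟨‖g‖ + 1, by positivity, fun x y => ?_, fun w => ?_⟩
  · set c : Fin 2 → ℝ := ![x, y] with hc
    have hTc : T c = x • b₁ + y • b₂ := by simp [T, hc]
    have hec : e.symm (T c) = c := e.symm_apply_apply c
    have hb : ‖c‖ ≤ ‖g‖ * ‖T c‖ := by
      calc ‖c‖ = ‖g (T c)‖ := by rw [show g (T c) = c from hec]
        _ ≤ ‖g‖ * ‖T c‖ := g.le_opNorm _
    have hb' : ‖c‖ ≤ (‖g‖ + 1) * ‖x • b₁ + y • b₂‖ := by
      rw [← hTc]
      refine hb.trans (mul_le_mul_of_nonneg_right (by linarith [norm_nonneg g]) (norm_nonneg _))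
    constructor
    · exact le_trans (by simpa [hc] using norm_le_pi_norm c 0) hb'
    · exact le_trans (by simpa [hc] using norm_le_pi_norm c 1) hb'
  · obtain ⟨c, hc⟩ := hsurj w
    exact ⟨c 0, c 1, by rw [← hc]; rfl⟩

lemma hKex (ψ : (Fin 2 → ℝ) → ℝ) (hcont : Continuous ψ)
    (hψnn : ∀ ξ, 0 ≤ ψ ξ)
    (hhom : ∀ (l : ℝ) (ξ : Fin 2 → ℝ), 0 ≤ l → ψ (l • ξ) = l ^ 2 * ψ ξ)
    (hpos : ∀ ξ : Fin 2 → ℝ, ξ ≠ 0 → 0 < ψ ξ)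
    (b₁ b₂ : Fin 2 → ℝ) (hli : LinearIndependent ℝ ![b₁, b₂]) :
    ∃ N : ℤ, 1 ≤ N ∧ ∀ m n : ℤ, ¬(|m| ≤ N ∧ |n| ≤ N) →
      |(m:ℝ)| * ψ ((Int.sign m : ℝ) • b₁) + |(n:ℝ)| * ψ ((Int.sign n : ℝ) • b₂)
        ≤ ψ ((m:ℝ) • b₁ + (n:ℝ) • b₂) := by
  obtain ⟨c, hc0, hc⟩ := L1 ψ hcont hhom hpos
  obtain ⟨C, hC0, hC, -⟩ := L2 b₁ b₂ hli
  have hψ0 : ψ 0 = 0 := by simpa using hhom 0 0 le_rfl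
  set Cψ : ℝ := max (max (ψ b₁) (ψ (-b₁))) (max (ψ b₂) (ψ (-b₂))) with hCψ
  have hCψ0 : 0 ≤ Cψ := le_trans (hψnn b₁) (le_trans (le_max_left _ _) (le_max_left _ _))
  have hsb : ∀ k : ℤ, ψ ((Int.sign k : ℝ) • b₁) ≤ Cψ ∧ ψ ((Int.sign k : ℝ) • b₂) ≤ Cψ := by
    intro k
    rcases lt_trichotomy k 0 with h | rfl | h
    · rw [Int.sign_eq_neg_one_iff_neg.mpr h]
      push_cast
      rw [neg_smul, one_smul, neg_smul, one_smul]
      exact ⟨le_trans (le_max_right _ _) (le_max_left _ _),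
        le_trans (le_max_right _ _) (le_max_right _ _)⟩
    · simp [hψ0, hCψ0]
    · rw [Int.sign_eq_one_iff_pos.mpr h]
      push_cast
      rw [one_smul, one_smul]
      exact ⟨le_trans (le_max_left _ _) (le_max_left _ _),
        le_trans (le_max_left _ _) (le_max_right _ _)⟩
  refine ⟨max 1 ⌈4 * C ^ 2 * Cψ / c⌉, le_max_left _ _, ?_⟩
  intro m n hmn
  set N : ℤ := max 1 ⌈4 * C ^ 2 * Cψ / c⌉ with hN
  set w : Fin 2 → ℝ := (m:ℝ) • b₁ + (n:ℝ) • b₂ with hw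
  have hm : |(m:ℝ)| ≤ C * ‖w‖ := (hC (m:ℝ) (n:ℝ)).1
  have hn : |(n:ℝ)| ≤ C * ‖w‖ := (hC (m:ℝ) (n:ℝ)).2
  set t : ℝ := |(m:ℝ)| + |(n:ℝ)| with ht
  have htN : (N : ℝ) + 1 ≤ t := by
    rcases not_and_or.mp hmn with h | h
    · have h1 : N + 1 ≤ |m| := by omega
      have h2 : ((N + 1 : ℤ) : ℝ) ≤ ((|m| : ℤ) : ℝ) := Int.cast_le.mpr h1
      push_cast at h2
      have := abs_nonneg (n:ℝ)
      simp only [ht]; linarith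
    · have h1 : N + 1 ≤ |n| := by omega
      have h2 : ((N + 1 : ℤ) : ℝ) ≤ ((|n| : ℤ) : ℝ) := Int.cast_le.mpr h1
      push_cast at h2
      have := abs_nonneg (m:ℝ)
      simp only [ht]; linarith
  have hq : 4 * C ^ 2 * Cψ / c ≤ (N : ℝ) := by
    refine le_trans (Int.le_ceil _) ?_
    exact Int.cast_le.mpr (le_max_right 1 _)
  have ht4 : 4 * C ^ 2 * Cψ / c + 1 ≤ t := by linarith
  have ht0 : 0 < t := by
    have : (0:ℝ) ≤ 4 * C ^ 2 * Cψ / c := by positivity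
    linarith
  -- t ≤ 2 C ‖w‖
  have htw : t ≤ 2 * C * ‖w‖ := by simp only [ht]; linarith
  -- chain
  have step1 : |(m:ℝ)| * ψ ((Int.sign m : ℝ) • b₁) + |(n:ℝ)| * ψ ((Int.sign n : ℝ) • b₂) ≤ t * Cψ := by
    have := (hsb m).1
    have := (hsb n).2
    have := abs_nonneg (m:ℝ)
    have := abs_nonneg (n:ℝ)
    nlinarith [(hsb m).1, (hsb n).2]
  have step2 : t * Cψ ≤ c * ‖w‖ ^ 2 := by
    have h4 : (0:ℝ) < 4 * C ^ 2 := by positivity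
    have e1 : 4 * C ^ 2 * Cψ ≤ t * c := (div_le_iff₀ hc0).mp (by linarith)
    have e2' : t * t ≤ (2 * C * ‖w‖) * (2 * C * ‖w‖) :=
      mul_le_mul htw htw ht0.le (by positivity)
    have e2 : c * (t * t) ≤ c * ((2 * C * ‖w‖) * (2 * C * ‖w‖)) :=
      mul_le_mul_of_nonneg_left e2' hc0.le
    nlinarith [mul_le_mul_of_nonneg_left e1 ht0.le, norm_nonneg w, e2]
  calc |(m:ℝ)| * ψ ((Int.sign m : ℝ) • b₁) + |(n:ℝ)| * ψ ((Int.sign n : ℝ) • b₂)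
      ≤ t * Cψ := step1
    _ ≤ c * ‖w‖ ^ 2 := step2
    _ ≤ ψ w := hc w


/-- The set of values `Σ λ_k ψ(ξ_k)` over admissible decompositions `Σ λ_k ξ_k = ξ`
with `λ_k ≥ 0` and `ξ_k ∈ 𝕊`. -/
def decompVals (ψ : (Fin 2 → ℝ) → ℝ) (b₁ b₂ : Fin 2 → ℝ) (ξ : Fin 2 → ℝ) : Set ℝ :=
  {s | ∃ (M : ℕ) (lam : Fin M → ℝ) (v : Fin M → (Fin 2 → ℝ)),
    (∀ k, 0 ≤ lam k) ∧ (∀ k, v k ∈ lattice b₁ b₂) ∧ (∑ k, lam k • v k) = ξ ∧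
    s = ∑ k, lam k * ψ (v k)}

/-- the infimum in the definition of the relaxed self-energy density `φ`
is attained. -/
theorem stmt5 (ψ : (Fin 2 → ℝ) → ℝ)
    (hcont : Continuous ψ) (hconv : ConvexOn ℝ Set.univ ψ)
    (hnonneg : ∀ ξ, 0 ≤ ψ ξ)
    (hhom : ∀ (l : ℝ) (ξ : Fin 2 → ℝ), 0 ≤ l → ψ (l • ξ) = l ^ 2 * ψ ξ)
    (hpos : ∀ ξ : Fin 2 → ℝ, ξ ≠ 0 → 0 < ψ ξ)
    (b₁ b₂ : Fin 2 → ℝ) (hli : LinearIndependent ℝ ![b₁, b₂])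
    (ξ : Fin 2 → ℝ) :
    sInf (decompVals ψ b₁ b₂ ξ) ∈ decompVals ψ b₁ b₂ ξ := by
  classical
  obtain ⟨N, hN1, hK⟩ := hKex ψ hcont hnonneg hhom hpos b₁ b₂ hli
  obtain ⟨C, hC0, hCb, hspan⟩ := L2 b₁ b₂ hli
  have hψ0 : ψ 0 = 0 := by simpa using hhom 0 0 le_rfl
  -- nonzero lattice vectors
  have hvne : ∀ p : ℤ × ℤ, p ≠ (0,0) → vecc b₁ b₂ p ≠ 0 := by
    rintro ⟨a, b⟩ hp h0
    have h := Fintype.linearIndependent_iff.mp hli (fun i => if i = 0 then (a : ℝ) else (b : ℝ))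
    have hsum : ∑ i : Fin 2, (if i = 0 then (a:ℝ) else (b:ℝ)) • ![b₁,b₂] i = 0 := by
      rw [Fin.sum_univ_two]; simpa [vecc] using h0
    have h1 := h hsum 0
    have h2 := h hsum 1
    simp only [if_pos rfl, if_neg (by decide : ¬((1 : Fin 2) = 0))] at h1 h2
    have : a = 0 := by exact_mod_cast h1
    have : b = 0 := by exact_mod_cast h2
    simp_all
  -- initial decomposition of ξ via the basis
  obtain ⟨x, y, hxy⟩ := hspan ξ
  have hb1lat : (if 0 ≤ x then b₁ else -b₁) ∈ lattice b₁ b₂ := by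
    split
    · exact ⟨1, 0, by simp⟩
    · exact ⟨-1, 0, by simp⟩
  have hb2lat : (if 0 ≤ y then b₂ else -b₂) ∈ lattice b₁ b₂ := by
    split
    · exact ⟨0, 1, by simp⟩
    · exact ⟨0, -1, by simp⟩
  obtain ⟨μ₁, hμ₁0, hμ₁s, hμ₁c⟩ := Sg ψ b₁ b₂ hnonneg N hN1 hK |x| (abs_nonneg x) _ hb1lat
  obtain ⟨μ₂, hμ₂0, hμ₂s, hμ₂c⟩ := Sg ψ b₁ b₂ hnonneg N hN1 hK |y| (abs_nonneg y) _ hb2lat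
  have e1 : |x| • (if 0 ≤ x then b₁ else -b₁) = x • b₁ := by
    rcases le_or_gt 0 x with h | h
    · rw [if_pos h, abs_of_nonneg h]
    · rw [if_neg (not_le.mpr h), abs_of_neg h, smul_neg, neg_smul, neg_neg]
  have e2 : |y| • (if 0 ≤ y then b₂ else -b₂) = y • b₂ := by
    rcases le_or_gt 0 y with h | h
    · rw [if_pos h, abs_of_nonneg h]
    · rw [if_neg (not_le.mpr h), abs_of_neg h, smul_neg, neg_smul, neg_neg]
  have hsum0 : (∑ p ∈ En N, (μ₁ + μ₂) p • vecc b₁ b₂ p) = ξ := by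
    simp only [Pi.add_apply, add_smul, Finset.sum_add_distrib, hμ₁s, hμ₂s]
    rw [e1, e2, hxy]
  set KB : ℝ := ∑ p ∈ En N, (μ₁ + μ₂) p * ψ (vecc b₁ b₂ p) with hKB
  have hKB0 : 0 ≤ KB :=
    Finset.sum_nonneg fun p _ => mul_nonneg (add_nonneg (hμ₁0 p) (hμ₂0 p)) (hnonneg _)
  -- the compact set A of reduced decompositions with cost ≤ KB
  have hp₀mem : ((1, 0) : ℤ × ℤ) ∈ En N :=
    mem_En.mpr ⟨by simpa using hN1, by simp; omega, by simp⟩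
  set A : Set (↥(En N) → ℝ) := {μ | (∀ p, 0 ≤ μ p) ∧
    (∑ p, μ p • vecc b₁ b₂ ↑p) = ξ ∧ (∑ p, μ p * ψ (vecc b₁ b₂ ↑p)) ≤ KB} with hA
  have hμ₀A : (fun p : ↥(En N) => (μ₁ + μ₂) ↑p) ∈ A := by
    refine ⟨fun p => add_nonneg (hμ₁0 _) (hμ₂0 _), ?_, ?_⟩
    · rw [Finset.sum_coe_sort (En N) (fun p => (μ₁ + μ₂) p • vecc b₁ b₂ p)]
      exact hsum0
    · rw [Finset.sum_coe_sort (En N) (fun p => (μ₁ + μ₂) p * ψ (vecc b₁ b₂ p))]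
  have hc2 : Continuous fun μ : ↥(En N) → ℝ => ∑ p, μ p * ψ (vecc b₁ b₂ ↑p) :=
    continuous_finset_sum _ (fun p _ => (continuous_apply p).mul continuous_const)
  have hclosed : IsClosed A := by
    have h1 : IsClosed {μ : ↥(En N) → ℝ | ∀ p, 0 ≤ μ p} := by
      have : {μ : ↥(En N) → ℝ | ∀ p, 0 ≤ μ p} = ⋂ p, {μ | 0 ≤ μ p} := by
        ext μ; simp
      rw [this]
      exact isClosed_iInter fun p => isClosed_le continuous_const (continuous_apply p)
    have h2 : IsClosed {μ : ↥(En N) → ℝ | (∑ p, μ p • vecc b₁ b₂ ↑p) = ξ} :=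
      isClosed_eq (continuous_finset_sum _
        (fun p _ => (continuous_apply p).smul continuous_const)) continuous_const
    have h3 : IsClosed {μ : ↥(En N) → ℝ | (∑ p, μ p * ψ (vecc b₁ b₂ ↑p)) ≤ KB} :=
      isClosed_le hc2 continuous_const
    have : A = {μ : ↥(En N) → ℝ | ∀ p, 0 ≤ μ p} ∩
        ({μ | (∑ p, μ p • vecc b₁ b₂ ↑p) = ξ} ∩ {μ | (∑ p, μ p * ψ (vecc b₁ b₂ ↑p)) ≤ KB}) := by
      ext μ; simp [hA, and_assoc]
    rw [this]
    exact h1.inter (h2.inter h3)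
  have huniv : (Finset.univ : Finset ↥(En N)).Nonempty := ⟨⟨(1,0), hp₀mem⟩, Finset.mem_univ _⟩
  set ε : ℝ := Finset.univ.inf' huniv (fun p : ↥(En N) => ψ (vecc b₁ b₂ ↑p)) with hεdef
  have hε : 0 < ε := by
    rw [hεdef, Finset.lt_inf'_iff]
    exact fun p _ => hpos _ (hvne ↑p (mem_En.mp p.2).2.2)
  have hbdd : Bornology.IsBounded A := by
    rw [isBounded_iff_forall_norm_le]
    refine ⟨KB / ε, fun μ hμ => ?_⟩
    rw [pi_norm_le_iff_of_nonneg (div_nonneg hKB0 hε.le)]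
    intro p
    rw [Real.norm_eq_abs, abs_of_nonneg (hμ.1 p), le_div_iff₀ hε]
    calc μ p * ε ≤ μ p * ψ (vecc b₁ b₂ ↑p) :=
          mul_le_mul_of_nonneg_left (Finset.inf'_le _ (Finset.mem_univ p)) (hμ.1 p)
      _ ≤ ∑ q, μ q * ψ (vecc b₁ b₂ ↑q) :=
          Finset.single_le_sum (f := fun q : ↥(En N) => μ q * ψ (vecc b₁ b₂ ↑q))
            (fun q _ => mul_nonneg (hμ.1 q) (hnonneg _)) (Finset.mem_univ p)
      _ ≤ KB := hμ.2.2
  have hcompact : IsCompact A := Metric.isCompact_of_isClosed_isBounded hclosed hbdd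
  obtain ⟨μs, hμsA, hminOn⟩ := hcompact.exists_isMinOn ⟨_, hμ₀A⟩ hc2.continuousOn
  have hmin : ∀ μ ∈ A, (∑ p, μs p * ψ (vecc b₁ b₂ ↑p)) ≤ ∑ p, μ p * ψ (vecc b₁ b₂ ↑p) :=
    fun μ hμ => isMinOn_iff.mp hminOn μ hμ
  set m₀ : ℝ := ∑ p, μs p * ψ (vecc b₁ b₂ ↑p) with hm₀
  -- m₀ ∈ decompVals
  have hm₀mem : m₀ ∈ decompVals ψ b₁ b₂ ξ := by
    set e := Fintype.equivFin ↥(En N) with he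
    refine ⟨Fintype.card ↥(En N), fun k => μs (e.symm k), fun k => vecc b₁ b₂ ↑(e.symm k),
      fun k => hμsA.1 _, fun k => ⟨(↑(e.symm k) : ℤ × ℤ).1, (↑(e.symm k) : ℤ × ℤ).2, rfl⟩, ?_, ?_⟩
    · rw [Equiv.sum_comp e.symm (fun p => μs p • vecc b₁ b₂ ↑p)]
      exact hμsA.2.1
    · rw [Equiv.sum_comp e.symm (fun p => μs p * ψ (vecc b₁ b₂ ↑p))]
  -- m₀ is a lower bound
  have lb : ∀ s ∈ decompVals ψ b₁ b₂ ξ, m₀ ≤ s := by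
    rintro s ⟨M, lam, v, hlam, hvl, hsum, rfl⟩
    obtain ⟨μ, hμ0, hμs, hμc⟩ := Rred ψ b₁ b₂ hnonneg N hN1 hK M lam v hlam hvl
    rw [hsum] at hμs
    have hcs : (∑ p : ↥(En N), μ ↑p * ψ (vecc b₁ b₂ ↑p)) = ∑ p ∈ En N, μ p * ψ (vecc b₁ b₂ p) :=
      Finset.sum_coe_sort (En N) (fun p => μ p * ψ (vecc b₁ b₂ p))
    by_cases hcase : (∑ p ∈ En N, μ p * ψ (vecc b₁ b₂ p)) ≤ KB
    · have hμ'A : (fun p : ↥(En N) => μ ↑p) ∈ A := by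
        refine ⟨fun p => hμ0 _, ?_, ?_⟩
        · rw [Finset.sum_coe_sort (En N) (fun p => μ p • vecc b₁ b₂ p)]
          exact hμs
        · rw [hcs]; exact hcase
      calc m₀ ≤ ∑ p : ↥(En N), μ ↑p * ψ (vecc b₁ b₂ ↑p) := hmin _ hμ'A
        _ = ∑ p ∈ En N, μ p * ψ (vecc b₁ b₂ p) := hcs
        _ ≤ _ := hμc
    · have h1 : m₀ ≤ KB := by
        calc m₀ ≤ ∑ p : ↥(En N), (μ₁ + μ₂) ↑p * ψ (vecc b₁ b₂ ↑p) := hmin _ hμ₀A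
          _ = KB := Finset.sum_coe_sort (En N) (fun p => (μ₁ + μ₂) p * ψ (vecc b₁ b₂ p))
      have h2 := not_le.mp hcase
      linarith
  have heq : sInf (decompVals ψ b₁ b₂ ξ) = m₀ :=
    le_antisymm (csInf_le ⟨m₀, lb⟩ hm₀mem) (le_csInf ⟨m₀, hm₀mem⟩ lb)
  rw [heq]
  exact hm₀mem

end
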